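/- Let f, g : {1,…,w̄} → ℝ≥0 be functions with Σ_i f(i) = Σ_i g(i). Suppose there are reals h̄ > 0, γ ∈ (0,1], ε ∈ (0,1), α ∈ (ε, 1) such that: for every index i with g(i) < f(i) we have f(i) − g(i) ≥ γ·h̄/(1+ε), and for every index i we have g(i) ≤ (1 − 2α/(1+ε))·h̄. Let G = { i : g(i) ≥ f(i) }. Then |G| ≥ γ·w̄ / (1 + ε − 2α + γ); in particular, if γ ≤ ε < α, then |G| ≥ γ·w̄. -/
import Mathlib


open Finset

/-- **Arithmetic core of the Repacking Lemma.**  Let `f g : Fin w̄ → ℝ≥0` with equal sums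
(`f i` = height of the `i`-th free rectangle, `g i` = height of the `i`-th newly free
rectangle).  Suppose that whenever `g i < f i` the gap is at least `γ·h̄/(1+ε)`, and every
`g i` is at most `(1 − 2α/(1+ε))·h̄`.  Then the set `G = {i : g i ≥ f i}` of good indices
satisfies `|G| ≥ γ·w̄/(1 + ε − 2α + γ)`; in particular, if `γ ≤ ε` (recall `ε < α`), then
`|G| ≥ γ·w̄`. -/
theorem repacking_good_indices (wbar : ℕ) (f g : Fin wbar → ℝ) (hbar γ ε α : ℝ)
    (hf : ∀ i, 0 ≤ f i) (hg : ∀ i, 0 ≤ g i)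
    (hsum : ∑ i, f i = ∑ i, g i)
    (hhbar : 0 < hbar) (hγ0 : 0 < γ) (hγ1 : γ ≤ 1)
    (hε0 : 0 < ε) (hε1 : ε < 1) (hεα : ε < α) (hα1 : α < 1)
    (hgap : ∀ i, g i < f i → γ * hbar / (1 + ε) ≤ f i - g i)
    (hcap : ∀ i, g i ≤ (1 - 2 * α / (1 + ε)) * hbar) :
    γ * (wbar : ℝ) / (1 + ε - 2 * α + γ) ≤
      ((univ.filter (fun i : Fin wbar => f i ≤ g i)).card : ℝ) ∧
    (γ ≤ ε →
      γ * (wbar : ℝ) ≤ ((univ.filter (fun i : Fin wbar => f i ≤ g i)).card : ℝ)) := by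
  classical
  set G := univ.filter (fun i : Fin wbar => f i ≤ g i) with hGdef
  set B := univ.filter (fun i : Fin wbar => ¬ f i ≤ g i) with hBdef
  have hε1' : (0:ℝ) < 1 + ε := by linarith
  have hcard : (G.card : ℝ) + B.card = wbar := by
    have := Finset.card_filter_add_card_filter_not
      (s := (univ : Finset (Fin wbar))) (p := fun i => f i ≤ g i)
    rw [hGdef, hBdef]
    exact_mod_cast by simpa using this
  have hsplit : ∑ i ∈ B, (f i - g i) = ∑ i ∈ G, (g i - f i) := by
    have h0 : ∑ i ∈ G, (f i - g i) + ∑ i ∈ B, (f i - g i) = 0 := by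
      rw [hGdef, hBdef, Finset.sum_filter_add_sum_filter_not]
      rw [Finset.sum_sub_distrib, hsum]
      ring
    have h1 : ∑ i ∈ G, (g i - f i) = - ∑ i ∈ G, (f i - g i) := by
      rw [← Finset.sum_neg_distrib]
      apply Finset.sum_congr rfl
      intros; ring
    linarith
  have hBlow : (B.card : ℝ) * (γ * hbar / (1 + ε)) ≤ ∑ i ∈ B, (f i - g i) := by
    have := Finset.card_nsmul_le_sum B (fun i => f i - g i) (γ * hbar / (1 + ε))
      (fun i hi => by
        rw [hBdef, Finset.mem_filter] at hi
        exact hgap i (lt_of_not_ge hi.2))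
    simpa [nsmul_eq_mul] using this
  have hGup : ∑ i ∈ G, (g i - f i) ≤ (G.card : ℝ) * ((1 - 2 * α / (1 + ε)) * hbar) := by
    have := Finset.sum_le_card_nsmul G (fun i => g i - f i) ((1 - 2 * α / (1 + ε)) * hbar)
      (fun i hi => by have := hcap i; have := hf i; simp; linarith)
    simpa [nsmul_eq_mul] using this
  have h1 : (B.card : ℝ) * (γ * hbar / (1 + ε)) ≤
      (G.card : ℝ) * ((1 - 2 * α / (1 + ε)) * hbar) := by
    calc (B.card : ℝ) * (γ * hbar / (1 + ε)) ≤ ∑ i ∈ B, (f i - g i) := hBlow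
      _ = ∑ i ∈ G, (g i - f i) := hsplit
      _ ≤ (G.card : ℝ) * ((1 - 2 * α / (1 + ε)) * hbar) := hGup
  -- multiply by (1+ε)/hbar
  have key : γ * (B.card : ℝ) ≤ (1 + ε - 2 * α) * G.card := by
    have h2 : (B.card : ℝ) * (γ * hbar) ≤ (G.card : ℝ) * ((1 + ε - 2 * α) * hbar) := by
      have := mul_le_mul_of_nonneg_right h1 (le_of_lt hε1')
      have hne : (1 + ε) ≠ 0 := ne_of_gt hε1'
      field_simp at this
      nlinarith [this]
    have h3 := mul_le_mul_of_nonneg_right h2 (le_of_lt (inv_pos.mpr hhbar))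
    have hne : hbar ≠ 0 := ne_of_gt hhbar
    field_simp at h3
    nlinarith [h3]
  have hGnn : (0:ℝ) ≤ G.card := Nat.cast_nonneg _
  have hw : γ * (wbar : ℝ) ≤ (1 + ε - 2 * α + γ) * G.card := by
    have : γ * (wbar : ℝ) = γ * G.card + γ * B.card := by rw [← hcard]; ring
    nlinarith [key]
  constructor
  · by_cases hd : 0 < 1 + ε - 2 * α + γ
    · rw [div_le_iff₀ hd]
      linarith [hw]
    · push_neg at hd
      have hlhs : γ * (wbar : ℝ) / (1 + ε - 2 * α + γ) ≤ 0 := by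
        apply div_nonpos_of_nonneg_of_nonpos
        · positivity
        · exact hd
      linarith
  · intro hγε
    by_cases hd : 0 < 1 + ε - 2 * α + γ
    · have hdle : 1 + ε - 2 * α + γ ≤ 1 := by linarith
      nlinarith [hw, hGnn]
    · push_neg at hd
      nlinarith [hw, hGnn]
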